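/- Let φ : ℍ → ℂ be injective holomorphic satisfying condition (4.2) with constant M ≥ 1 (with threshold 1) and suppose φ is an (H,α)-Hölder tract with threshold T₀ ≥ 1. Then there exist constants 0 < c ≤ C < ∞ such that for every T ≥ 1: c·|φ(T)| ≤ diam(φ(Q_T)) ≤ C·|φ(T)| and c·T·|φ′(T)| ≤ diam(φ(Q_T)) ≤ C·T·|φ′(T)|. -/

import Mathlib

open Complex Set

noncomputable section

/-- The open right half-plane `ℍ = {z ∈ ℂ : Re z > 0}`. -/
def HalfPlane : Set ℂ := {z : ℂ | 0 < z.re}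

/-- The open rectangle `Q_T = {ξ ∈ ℂ : 0 < Re ξ < 4T and −4T < Im ξ < 4T}`. -/
def Q (T : ℝ) : Set ℂ := {z : ℂ | 0 < z.re ∧ z.re < 4 * T ∧ -(4 * T) < z.im ∧ z.im < 4 * T}

/-- Condition (4.2) with constant `M` and threshold `γ`:
`|φ(ξ)| ≤ M·|φ(ξ′)|` for every `T ≥ γ` and all `ξ, ξ′ ∈ Q_T \ Q_{T/8}`. -/
def Cond42 (φ : ℂ → ℂ) (M γ : ℝ) : Prop :=
  ∀ T : ℝ, γ ≤ T → ∀ ξ ∈ Q T \ Q (T / 8), ∀ ξ' ∈ Q T \ Q (T / 8),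
    ‖φ ξ‖ ≤ M * ‖φ ξ'‖

/-- `φ` is an `(H,α)`-Hölder tract with threshold `T₀`:
`|φ(Tz₁) − φ(Tz₂)| ≤ H·T·|φ′(T)|·|z₁ − z₂|^α` for every `T ≥ T₀` and all `z₁, z₂ ∈ Q₁`. -/
def HolderTract (φ : ℂ → ℂ) (H α T₀ : ℝ) : Prop :=
  ∀ T : ℝ, T₀ ≤ T → ∀ z₁ ∈ Q 1, ∀ z₂ ∈ Q 1,
    ‖φ ((T : ℂ) * z₁) - φ ((T : ℂ) * z₂)‖ ≤
      H * T * ‖deriv φ (T : ℂ)‖ * (‖z₁ - z₂‖) ^ α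

section Aux

open Metric Filter
open scoped Topology Real


open Complex Set Metric Filter
open scoped Topology Real

lemma deriv_ne_zero_of_injOn {f : ℂ → ℂ} {s : Set ℂ} (hs : IsOpen s)
    (hd : DifferentiableOn ℂ f s) (hi : Set.InjOn f s) {c : ℂ} (hc : c ∈ s) :
    deriv f c ≠ 0 := by
  intro hder
  have hsn : s ∈ 𝓝 c := hs.mem_nhds hc
  have hfa : AnalyticAt ℂ f c := hd.analyticAt hsn
  have hga : AnalyticAt ℂ (fun z => f z - f c) c := hfa.sub analyticAt_const
  rcases eq_top_or_lt_top (analyticOrderAt (fun z => f z - f c) c) with ho | ho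
  · -- locally constant: contradicts injectivity
    have h1 : ∀ᶠ z in 𝓝 c, f z = f c := by
      filter_upwards [analyticOrderAt_eq_top.mp ho] with z hz
      exact sub_eq_zero.mp hz
    have h2 : ∀ᶠ z in 𝓝[≠] c, (f z = f c ∧ z ∈ s) ∧ z ∈ ({c}ᶜ : Set ℂ) :=
      (((h1.and hsn).filter_mono nhdsWithin_le_nhds).and eventually_mem_nhdsWithin)
    obtain ⟨z, ⟨hzfc, hzs⟩, hzc⟩ := h2.exists
    exact hzc (hi hzs hc hzfc)
  · obtain ⟨n, hn⟩ := WithTop.ne_top_iff_exists.mp ho.ne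
    obtain ⟨g, hg, hg0, hfg⟩ := hga.analyticOrderAt_eq_natCast.mp hn.symm
    rcases Nat.lt_or_ge n 2 with hn2 | hn2
    · interval_cases n
      · have h0 := hfg.self_of_nhds
        simp only [sub_self, pow_zero, one_smul] at h0
        exact hg0 h0.symm
      · have hfg' : (fun z => f z - f c) =ᶠ[𝓝 c] (fun z => (z - c) ^ 1 • g z) := hfg
        have h1 : HasDerivAt (fun z => (z - c) * g z)
            (1 * g c + (c - c) * deriv g c) c :=
          ((hasDerivAt_id c).sub_const c).mul hg.differentiableAt.hasDerivAt
        have h2 : deriv (fun z => f z - f c) c = 1 * g c + (c - c) * deriv g c := by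
          rw [hfg'.deriv_eq]
          simp only [pow_one, smul_eq_mul]
          exact h1.deriv
        rw [deriv_sub_const, hder] at h2
        simp only [one_mul, sub_self, zero_mul, add_zero] at h2
        exact hg0 h2.symm
    · set a := g c with ha
      have hn0 : (n : ℂ) ≠ 0 := Nat.cast_ne_zero.mpr (by omega)
      -- the analytic n-th root
      set E : ℂ → ℂ := fun z => Complex.exp (Complex.log a / n + Complex.log (g z / a) / n)
        with hE
      set ρ : ℂ → ℂ := fun z => (z - c) * E z with hρ
      have hga' : AnalyticAt ℂ (fun z => g z / a) c := hg.div analyticAt_const hg0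
      have hga1 : g c / a = 1 := div_self hg0
      have hEa : AnalyticAt ℂ E c := by
        have hlog : AnalyticAt ℂ (fun z => Complex.log (g z / a)) c :=
          hga'.clog (by rw [hga1]; exact one_mem_slitPlane)
        have hin : AnalyticAt ℂ (fun z => Complex.log a / n + Complex.log (g z / a) / n) c :=
          analyticAt_const.add (hlog.div analyticAt_const hn0)
        exact ((Complex.differentiable_exp.analyticAt _).comp hin : _)
      have hρa : AnalyticAt ℂ ρ c := (analyticAt_id.sub analyticAt_const).mul hEa
      have hEc : E c = Complex.exp (Complex.log a / n) := by
        simp [hE, hga1]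
      have hEcne : E c ≠ 0 := by rw [hEc]; exact Complex.exp_ne_zero _
      have hρc : ρ c = 0 := by simp [hρ]
      -- eventual functional equation : f z = f c + ρ z ^ n
      have hgne : ∀ᶠ z in 𝓝 c, g z ≠ 0 := hg.continuousAt.eventually_ne hg0
      have heq : ∀ᶠ z in 𝓝 c, f z = f c + ρ z ^ n := by
        filter_upwards [hfg, hgne] with z hz hgz
        have hEn : E z ^ n = g z := by
          rw [hE]
          simp only
          rw [← Complex.exp_nat_mul, mul_add, mul_div_cancel₀ _ hn0, mul_div_cancel₀ _ hn0,
            Complex.exp_add, Complex.exp_log hg0, Complex.exp_log (div_ne_zero hgz hg0)]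
          field_simp
        have hz' : f z - f c = (z - c) ^ n * g z := by simpa using hz
        have : ρ z ^ n = (z - c) ^ n * g z := by rw [hρ]; simp only; rw [mul_pow, hEn]
        rw [this]
        linear_combination hz'
      -- ρ is not locally constant
      have hnotconst : ¬ ∀ᶠ z in 𝓝 c, ρ z = ρ c := by
        intro hconst
        have hEne : ∀ᶠ z in 𝓝 c, E z ≠ 0 := hEa.continuousAt.eventually_ne hEcne
        have h3 : ∀ᶠ z in 𝓝[≠] c, (ρ z = ρ c ∧ E z ≠ 0) ∧ z ∈ ({c}ᶜ : Set ℂ) :=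
          ((hconst.and hEne).filter_mono nhdsWithin_le_nhds).and eventually_mem_nhdsWithin
        obtain ⟨z, ⟨hz1, hz2⟩, hz3⟩ := h3.exists
        rw [hρc, hρ] at hz1
        simp only at hz1
        rcases mul_eq_zero.mp hz1 with h | h
        · exact hz3 (by simpa [sub_eq_zero] using h)
        · exact hz2 h
      have hmap : 𝓝 (ρ c) ≤ Filter.map ρ (𝓝 c) :=
        hρa.eventually_constant_or_nhds_le_map_nhds_aux.resolve_left hnotconst
      -- the good neighborhood
      have hUn : {z | f z = f c + ρ z ^ n ∧ z ∈ s} ∈ 𝓝 c := heq.and hsn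
      have himg : ρ '' {z | f z = f c + ρ z ^ n ∧ z ∈ s} ∈ 𝓝 (0 : ℂ) := by
        rw [← hρc]
        exact hmap (Filter.image_mem_map hUn)
      obtain ⟨ε, hε, hball⟩ := Metric.mem_nhds_iff.mp himg
      -- the root of unity
      set ζ : ℂ := Complex.exp (((2 * Real.pi / n : ℝ) : ℂ) * Complex.I) with hζ
      have hζn : ζ ^ n = 1 := by
        rw [hζ, ← Complex.exp_nat_mul]
        have hc' : ((n : ℂ)) * (((2 * Real.pi / n : ℝ) : ℂ) * Complex.I)
            = 2 * (Real.pi : ℂ) * Complex.I := by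
          push_cast
          field_simp
        rw [hc', Complex.exp_two_pi_mul_I]
      have hπ := Real.pi_pos
      have hnR : (2 : ℝ) ≤ (n : ℝ) := by exact_mod_cast (by omega : 2 ≤ n)
      have hζ1 : ζ ≠ 1 := by
        intro h1
        rw [hζ, Complex.exp_eq_one_iff] at h1
        obtain ⟨k, hk⟩ := h1
        have him := congrArg Complex.im hk
        simp at him
        -- him : 2 * π / n = k * (2 * π)
        have h2 : 2 * Real.pi = (k : ℝ) * (2 * Real.pi) * n := by
          have hnne : (n : ℝ) ≠ 0 := by positivity
          field_simp at him
          linear_combination (2 * Real.pi) * him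
        have hkn : (k : ℝ) * n = 1 := by
          have h2π : (2 * Real.pi) ≠ 0 := by positivity
          apply mul_left_cancel₀ h2π
          linear_combination -h2
        have hnpos : (0 : ℝ) ≤ (n : ℝ) := by positivity
        rcases (by omega : k ≤ 0 ∨ 1 ≤ k) with hk0 | hk1
        · have hk0' : (k : ℝ) ≤ 0 := by exact_mod_cast hk0
          nlinarith [mul_nonneg (neg_nonneg.2 hk0') hnpos]
        · have hk1' : (1 : ℝ) ≤ (k : ℝ) := by exact_mod_cast hk1
          nlinarith [mul_nonneg (sub_nonneg.2 hk1') hnpos]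
      have hζabs : ‖ζ‖ = 1 := by
        rw [hζ]; exact Complex.norm_exp_ofReal_mul_I _
      -- two distinct preimages with equal f-values
      have hw1 : ((ε / 2 : ℝ) : ℂ) ∈ ball (0 : ℂ) ε := by
        simp only [mem_ball, dist_zero_right, Complex.norm_real, Real.norm_eq_abs,
          abs_of_pos (by linarith : (0:ℝ) < ε / 2)]
        linarith
      have hw2 : ζ * ((ε / 2 : ℝ) : ℂ) ∈ ball (0 : ℂ) ε := by
        simp only [mem_ball, dist_zero_right, norm_mul, hζabs, one_mul,
          Complex.norm_real, Real.norm_eq_abs, abs_of_pos (by linarith : (0:ℝ) < ε / 2)]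
        linarith
      obtain ⟨z₁, hz₁U, hρ1⟩ := hball hw1
      obtain ⟨z₂, hz₂U, hρ2⟩ := hball hw2
      have hεne : ((ε / 2 : ℝ) : ℂ) ≠ 0 := by
        simp only [ne_eq, Complex.ofReal_eq_zero]
        linarith
      have hz12 : z₁ ≠ z₂ := by
        intro h
        rw [h, hρ2] at hρ1
        have hmm : ζ * ((ε / 2 : ℝ) : ℂ) = 1 * ((ε / 2 : ℝ) : ℂ) := by rw [hρ1, one_mul]
        exact hζ1 (mul_right_cancel₀ hεne hmm)
      have hfz : f z₁ = f z₂ := by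
        have h1 := hz₁U.1
        have h2 := hz₂U.1
        rw [h1, h2, hρ1, hρ2, mul_pow, hζn, one_mul]
      exact hz12 (hi hz₁U.2 hz₂U.2 hfz)

lemma isOpen_halfPlane : IsOpen HalfPlane :=
  isOpen_lt continuous_const Complex.continuous_re

lemma Q_subset_halfPlane (T : ℝ) : Q T ⊆ HalfPlane := fun _ hz => hz.1

lemma Q_mono {T T' : ℝ} (h : T ≤ T') : Q T ⊆ Q T' := by
  rintro z ⟨h1, h2, h3, h4⟩
  exact ⟨h1, by linarith, by linarith, by linarith⟩

lemma ofReal_mem_Q {t T : ℝ} (h1 : 0 < t) (h2 : t < 4 * T) : (t : ℂ) ∈ Q T := by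
  refine ⟨by simpa using h1, by simpa using h2, ?_, ?_⟩ <;>
    simp [Complex.ofReal_im] <;> linarith

lemma ofReal_not_mem_Q {t T : ℝ} (h : 4 * T ≤ t) : (t : ℂ) ∉ Q T := by
  rintro ⟨_, h2, _, _⟩
  rw [Complex.ofReal_re] at h2
  linarith

lemma ofReal_mem_ann {t T : ℝ} (h0 : T / 2 ≤ t) (h2 : t < 4 * T) :
    (t : ℂ) ∈ Q T \ Q (T / 8) := by
  have hT : 0 < T := by linarith
  refine ⟨ofReal_mem_Q (by linarith) h2, ofReal_not_mem_Q (by linarith)⟩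

lemma ball_subset_Q {T : ℝ} (hT : 0 < T) : Metric.ball (T : ℂ) T ⊆ Q T := by
  intro z hz
  rw [Metric.mem_ball, Complex.dist_eq] at hz
  have hre : |(z - (T : ℂ)).re| ≤ ‖z - (T : ℂ)‖ := Complex.abs_re_le_norm _
  have him : |(z - (T : ℂ)).im| ≤ ‖z - (T : ℂ)‖ := Complex.abs_im_le_norm _
  simp only [Complex.sub_re, Complex.sub_im, Complex.ofReal_re, Complex.ofReal_im,
    sub_zero] at hre him
  have h1 := abs_lt.mp (lt_of_le_of_lt hre hz)
  have h2 := abs_lt.mp (lt_of_le_of_lt him hz)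
  exact ⟨by linarith [h1.1], by linarith [h1.2], by linarith [h2.1], by linarith [h2.2]⟩

lemma ball_subset_ann {T : ℝ} (hT : 0 < T) :
    Metric.ball (T : ℂ) (T / 2) ⊆ Q T \ Q (T / 8) := by
  intro z hz
  rw [Metric.mem_ball, Complex.dist_eq] at hz
  have hre : |(z - (T : ℂ)).re| ≤ ‖z - (T : ℂ)‖ := Complex.abs_re_le_norm _
  simp only [Complex.sub_re, Complex.ofReal_re] at hre
  have h1 := abs_lt.mp (lt_of_le_of_lt hre hz)
  refine ⟨ball_subset_Q hT (Metric.ball_subset_ball (by linarith)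
    (show z ∈ Metric.ball (T:ℂ) (T/2) by rwa [Metric.mem_ball, Complex.dist_eq])), ?_⟩
  rintro ⟨_, hc, _, _⟩
  have : 4 * (T / 8) = T / 2 := by ring
  rw [this] at hc
  linarith [h1.1]

lemma div_mem_Q1 {T : ℝ} (hT : 0 < T) {z : ℂ} (hz : z ∈ Q T) :
    z / (T : ℂ) ∈ Q 1 ∧ (T : ℂ) * (z / (T : ℂ)) = z := by
  obtain ⟨h1, h2, h3, h4⟩ := hz
  constructor
  · refine ⟨?_, ?_, ?_, ?_⟩ <;>
      simp only [Complex.div_ofReal_re, Complex.div_ofReal_im, mul_one]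
    · exact div_pos h1 hT
    · exact (div_lt_iff₀ hT).mpr (by linarith)
    · rw [neg_lt, ← neg_div]
      exact (div_lt_iff₀ hT).mpr (by linarith)
    · exact (div_lt_iff₀ hT).mpr (by linarith)
  · rw [mul_div_assoc']
    exact mul_div_cancel_left₀ z (Complex.ofReal_ne_zero.mpr hT.ne')

lemma abs_sub_Q1 {z₁ z₂ : ℂ} (h1 : z₁ ∈ Q 1) (h2 : z₂ ∈ Q 1) :
    ‖z₁ - z₂‖ ≤ 12 := by
  obtain ⟨a1, a2, a3, a4⟩ := h1
  obtain ⟨b1, b2, b3, b4⟩ := h2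
  refine (Complex.norm_le_abs_re_add_abs_im _).trans ?_
  simp only [Complex.sub_re, Complex.sub_im]
  have hre : |z₁.re - z₂.re| ≤ 4 := abs_le.mpr ⟨by norm_num at a2 b2 ⊢; linarith,
    by norm_num at a2 b2 ⊢; linarith⟩
  have him : |z₁.im - z₂.im| ≤ 8 := abs_le.mpr ⟨by norm_num at a3 a4 b3 b4 ⊢; linarith,
    by norm_num at a3 a4 b3 b4 ⊢; linarith⟩
  linarith

lemma rpow_le_twelve {x α : ℝ} (hx : 0 ≤ x) (hx12 : x ≤ 12) (hα : 0 < α) (hα1 : α ≤ 1) :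
    x ^ α ≤ 12 := by
  calc x ^ α ≤ 12 ^ α := Real.rpow_le_rpow hx hx12 hα.le
  _ ≤ 12 ^ (1 : ℝ) := Real.rpow_le_rpow_of_exponent_le (by norm_num) hα1
  _ = 12 := Real.rpow_one 12

end Aux

open Metric Filter in
/-- **Lemma (diameter of a Hölder tract).**  For a Hölder tract,
`|φ(T)| ≍ diam(φ(Q_T)) ≍ T·|φ′(T)|` for all `T ≥ 1`. -/
theorem holder_tract_diam (M H α T₀ : ℝ) (hM : 1 ≤ M) (hH : 1 ≤ H)
    (hα : α ∈ Ioc (0 : ℝ) 1) (hT₀ : 1 ≤ T₀)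
    (φ : ℂ → ℂ) (hd : DifferentiableOn ℂ φ HalfPlane) (hi : InjOn φ HalfPlane)
    (h42 : Cond42 φ M 1) (hht : HolderTract φ H α T₀) :
    ∃ c C : ℝ, 0 < c ∧ c ≤ C ∧ ∀ T : ℝ, 1 ≤ T →
      (c * ‖φ (T : ℂ)‖ ≤ Metric.diam (φ '' Q T) ∧
        Metric.diam (φ '' Q T) ≤ C * ‖φ (T : ℂ)‖) ∧
      (c * (T * ‖deriv φ (T : ℂ)‖) ≤ Metric.diam (φ '' Q T) ∧
        Metric.diam (φ '' Q T) ≤ C * (T * ‖deriv φ (T : ℂ)‖)) := by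
  obtain ⟨hα0, hα1⟩ := hα
  have hH0 : (0:ℝ) < H := by linarith
  -- pairwise Hölder bound at scale T ≥ T₀
  have hpair : ∀ T : ℝ, T₀ ≤ T → ∀ z₁ ∈ Q T, ∀ z₂ ∈ Q T,
      ‖φ z₁ - φ z₂‖ ≤ H * T * ‖deriv φ (T:ℂ)‖ * 12 := by
    intro T hT z₁ hz₁ z₂ hz₂
    have hT0 : (0:ℝ) < T := by linarith
    obtain ⟨hw₁, he₁⟩ := div_mem_Q1 hT0 hz₁
    obtain ⟨hw₂, he₂⟩ := div_mem_Q1 hT0 hz₂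
    have hkey := hht T hT _ hw₁ _ hw₂
    rw [he₁, he₂] at hkey
    refine hkey.trans ?_
    have h12 : ‖z₁ / (T:ℂ) - z₂ / (T:ℂ)‖ ^ α ≤ 12 :=
      rpow_le_twelve (norm_nonneg _) (abs_sub_Q1 hw₁ hw₂) hα0 hα1
    have hnn : 0 ≤ H * T * ‖deriv φ (T:ℂ)‖ := by positivity
    exact mul_le_mul_of_nonneg_left h12 hnn
  -- boundedness of the images
  have hbound : ∀ T : ℝ, 1 ≤ T → Bornology.IsBounded (φ '' Q T) := by
    intro T hT
    have hT'T₀ : T₀ ≤ max T T₀ := le_max_right _ _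
    have hT'1 : (1:ℝ) ≤ max T T₀ := le_trans hT (le_max_left _ _)
    have hsub : φ '' Q T ⊆ Metric.closedBall (φ ((max T T₀ : ℝ):ℂ))
        (H * (max T T₀) * ‖deriv φ ((max T T₀ : ℝ):ℂ)‖ * 12) := by
      rintro x ⟨z, hz, rfl⟩
      have hzQ : z ∈ Q (max T T₀) := Q_mono (le_max_left _ _) hz
      have hTQ : ((max T T₀ : ℝ):ℂ) ∈ Q (max T T₀) := ofReal_mem_Q (by linarith) (by linarith)
      rw [Metric.mem_closedBall, Complex.dist_eq]
      exact hpair _ hT'T₀ _ hzQ _ hTQ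
    exact Metric.isBounded_closedBall.subset hsub
  have hTQ : ∀ T : ℝ, 1 ≤ T → (T:ℂ) ∈ Q T := fun T hT =>
    ofReal_mem_Q (by linarith) (by linarith)
  have hdistD : ∀ T : ℝ, 1 ≤ T → ∀ z₁ ∈ Q T, ∀ z₂ ∈ Q T,
      ‖φ z₁ - φ z₂‖ ≤ Metric.diam (φ '' Q T) := by
    intro T hT z₁ h1 z₂ h2
    rw [← Complex.dist_eq]
    exact Metric.dist_le_diam_of_mem (hbound T hT) (mem_image_of_mem _ h1) (mem_image_of_mem _ h2)
  -- d₁ : positive lower bound for all the diameters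
  have hd₁pos : 0 < ‖φ 1 - φ 2‖ := by
    have h12 : φ (1:ℂ) ≠ φ (2:ℂ) := by
      intro h
      have h2 := hi (show (1:ℂ) ∈ HalfPlane by simp [HalfPlane])
        (show (2:ℂ) ∈ HalfPlane by simp [HalfPlane]) h
      norm_num at h2
    exact norm_pos_iff.mpr (sub_ne_zero.mpr h12)
  have hd₁le : ∀ T : ℝ, 1 ≤ T → ‖φ 1 - φ 2‖ ≤ Metric.diam (φ '' Q T) := by
    intro T hT
    have h1 : (1:ℂ) ∈ Q T := by
      simpa using ofReal_mem_Q (show (0:ℝ) < 1 by norm_num) (show (1:ℝ) < 4*T by linarith)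
    have h2 : (2:ℂ) ∈ Q T := by
      simpa using ofReal_mem_Q (show (0:ℝ) < 2 by norm_num) (show (2:ℝ) < 4*T by linarith)
    exact hdistD T hT _ h1 _ h2
  -- Schwarz lemma : T |φ'(T)| ≤ diam
  have hψD : ∀ T : ℝ, 1 ≤ T →
      T * ‖deriv φ (T:ℂ)‖ ≤ Metric.diam (φ '' Q T) := by
    intro T hT
    have hT0 : (0:ℝ) < T := by linarith
    refine le_of_forall_pos_le_add (fun ε hε => ?_)
    have hmaps : MapsTo φ (Metric.ball (T:ℂ) T)
        (Metric.ball (φ (T:ℂ)) (Metric.diam (φ '' Q T) + ε)) := by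
      intro z hz
      rw [Metric.mem_ball, Complex.dist_eq]
      have := hdistD T hT _ (ball_subset_Q hT0 hz) _ (hTQ T hT)
      linarith
    have hdd : DifferentiableOn ℂ φ (Metric.ball (T:ℂ) T) :=
      hd.mono ((ball_subset_Q hT0).trans (Q_subset_halfPlane T))
    have hw := Complex.norm_deriv_le_div_of_mapsTo_ball hdd (hmaps.mono_right Metric.ball_subset_closedBall) hT0
    have hmul := mul_le_mul_of_nonneg_left hw hT0.le
    have heq : T * ((Metric.diam (φ '' Q T) + ε) / T) = Metric.diam (φ '' Q T) + ε := by
      field_simp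
    rwa [heq] at hmul
  -- Cauchy + (4.2) : T |φ'(T)| ≤ 2(M+1) |φ(T)|
  have hψφ : ∀ T : ℝ, 1 ≤ T →
      T * ‖deriv φ (T:ℂ)‖ ≤ 2*(M+1) * ‖φ (T:ℂ)‖ := by
    intro T hT
    have hT0 : (0:ℝ) < T := by linarith
    refine le_of_forall_pos_le_add (fun ε hε => ?_)
    have hTann : (T:ℂ) ∈ Q T \ Q (T/8) := ofReal_mem_ann (by linarith) (by linarith)
    have hmaps : MapsTo φ (Metric.ball (T:ℂ) (T/2))
        (Metric.ball (φ (T:ℂ)) ((M+1) * ‖φ (T:ℂ)‖ + ε/2)) := by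
      intro z hz
      have hzann := ball_subset_ann hT0 hz
      have h42z := h42 T hT z hzann (T:ℂ) hTann
      rw [Metric.mem_ball, Complex.dist_eq]
      have htri : ‖φ z - φ (T:ℂ)‖ ≤
          ‖φ z‖ + ‖φ (T:ℂ)‖ := by
        simpa using norm_sub_le (φ z) (φ (T:ℂ))
      have hnn : 0 ≤ ‖φ (T:ℂ)‖ := norm_nonneg _
      linarith
    have hdd : DifferentiableOn ℂ φ (Metric.ball (T:ℂ) (T/2)) :=
      hd.mono (((ball_subset_ann hT0).trans diff_subset).trans (Q_subset_halfPlane T))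
    have hw := Complex.norm_deriv_le_div_of_mapsTo_ball hdd (hmaps.mono_right Metric.ball_subset_closedBall) (by linarith : (0:ℝ) < T/2)
    have hmul := mul_le_mul_of_nonneg_left hw hT0.le
    have heq : T * (((M+1) * ‖φ (T:ℂ)‖ + ε/2) / (T/2)) =
        2*(M+1) * ‖φ (T:ℂ)‖ + ε := by
      field_simp
    rwa [heq] at hmul
  -- Hölder : diam ≤ 12 H T |φ'(T)| for T ≥ T₀
  have hDψ : ∀ T : ℝ, T₀ ≤ T →
      Metric.diam (φ '' Q T) ≤ 12 * H * (T * ‖deriv φ (T:ℂ)‖) := by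
    intro T hT
    have hT1 : (1:ℝ) ≤ T := le_trans hT₀ hT
    have hb : Metric.diam (φ '' Q T) ≤ H * T * ‖deriv φ (T:ℂ)‖ * 12 := by
      refine Metric.diam_le_of_forall_dist_le (by positivity) ?_
      rintro x ⟨z₁, h1, rfl⟩ y ⟨z₂, h2, rfl⟩
      rw [Complex.dist_eq]
      exact hpair T hT _ h1 _ h2
    calc Metric.diam (φ '' Q T) ≤ H * T * ‖deriv φ (T:ℂ)‖ * 12 := hb
    _ = 12 * H * (T * ‖deriv φ (T:ℂ)‖) := by ring
  -- |φ(T)| ≤ |φ(1)| + H T |φ'(T)| for T ≥ T₀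
  have hφψ : ∀ T : ℝ, T₀ ≤ T → ‖φ (T:ℂ)‖ ≤
      ‖φ 1‖ + H * (T * ‖deriv φ (T:ℂ)‖) := by
    intro T hT
    have hT1 : (1:ℝ) ≤ T := le_trans hT₀ hT
    have hT0 : (0:ℝ) < T := by linarith
    have hz1 : (1:ℂ) ∈ Q 1 := by simpa using ofReal_mem_Q one_pos (by norm_num)
    have hz2 : ((T⁻¹ : ℝ):ℂ) ∈ Q 1 := by
      refine ofReal_mem_Q (by positivity) ?_
      have h1 : T⁻¹ ≤ 1 := by
        rw [inv_le_one_iff₀]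
        right; exact hT1
      linarith
    have hkey := hht T hT _ hz1 _ hz2
    rw [mul_one] at hkey
    have hTinv : (T:ℂ) * ((T⁻¹ : ℝ):ℂ) = 1 := by
      push_cast
      exact mul_inv_cancel₀ (Complex.ofReal_ne_zero.mpr hT0.ne')
    rw [hTinv] at hkey
    have habs : ‖(1:ℂ) - ((T⁻¹ : ℝ):ℂ)‖ ^ α ≤ 1 := by
      have he : (1:ℂ) - ((T⁻¹:ℝ):ℂ) = (((1 - T⁻¹ : ℝ)):ℂ) := by push_cast; ring
      rw [he, Complex.norm_real, Real.norm_eq_abs]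
      have hinv0 : 0 ≤ T⁻¹ := by positivity
      have hinv1 : T⁻¹ ≤ 1 := by
        rw [inv_le_one_iff₀]; right; exact hT1
      have h01 : |1 - T⁻¹| ≤ 1 := abs_le.mpr ⟨by linarith, by linarith⟩
      exact Real.rpow_le_one (abs_nonneg _) h01 hα0.le
    have hnn : 0 ≤ H * T * ‖deriv φ (T:ℂ)‖ := by positivity
    have hle : ‖φ (T:ℂ) - φ 1‖ ≤ H * (T * ‖deriv φ (T:ℂ)‖) := by
      refine hkey.trans ?_
      calc H * T * ‖deriv φ (T:ℂ)‖ * ‖1 - ((T⁻¹:ℝ):ℂ)‖ ^ α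
          ≤ H * T * ‖deriv φ (T:ℂ)‖ * 1 := mul_le_mul_of_nonneg_left habs hnn
      _ = H * (T * ‖deriv φ (T:ℂ)‖) := by ring
    have htri : ‖φ (T:ℂ)‖ - ‖φ 1‖ ≤
        ‖φ (T:ℂ) - φ 1‖ := by
      simpa using norm_sub_norm_le (φ (T:ℂ)) (φ (1:ℂ))
    linarith
  -- φ(T) ≠ 0 for real T ≥ 1
  have hφpos : ∀ T : ℝ, 1 ≤ T → 0 < ‖φ (T:ℂ)‖ := by
    intro T hT
    have hT0 : (0:ℝ) < T := by linarith
    rcases eq_or_ne (φ (T:ℂ)) 0 with h0 | h0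
    · exfalso
      have hTann : (T:ℂ) ∈ Q T \ Q (T/8) := ofReal_mem_ann (by linarith) (by linarith)
      have h2T : ((2*T : ℝ):ℂ) ∈ Q T \ Q (T/8) := ofReal_mem_ann (by linarith) (by linarith)
      have h3T : ((3*T : ℝ):ℂ) ∈ Q T \ Q (T/8) := ofReal_mem_ann (by linarith) (by linarith)
      have e2 := h42 T hT _ h2T _ hTann
      have e3 := h42 T hT _ h3T _ hTann
      rw [h0] at e2 e3
      simp only [map_zero, norm_zero, mul_zero] at e2 e3
      have e2' : φ ((2*T:ℝ):ℂ) = 0 :=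
        norm_eq_zero.mp (le_antisymm e2 (norm_nonneg _))
      have e3' : φ ((3*T:ℝ):ℂ) = 0 :=
        norm_eq_zero.mp (le_antisymm e3 (norm_nonneg _))
      have hmem2 : ((2*T:ℝ):ℂ) ∈ HalfPlane := by simp [HalfPlane]; linarith
      have hmem3 : ((3*T:ℝ):ℂ) ∈ HalfPlane := by simp [HalfPlane]; linarith
      have heq23 := hi hmem2 hmem3 (by rw [e2', e3'])
      rw [Complex.ofReal_inj] at heq23
      linarith
    · exact norm_pos_iff.mpr h0
  -- φ'(T) ≠ 0 (injectivity)
  have hdpos : ∀ T : ℝ, 1 ≤ T → 0 < ‖deriv φ (T:ℂ)‖ := by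
    intro T hT
    refine norm_pos_iff.mpr (deriv_ne_zero_of_injOn isOpen_halfPlane hd hi ?_)
    simp only [HalfPlane, mem_setOf_eq, Complex.ofReal_re]
    linarith
  -- compactness on [1, T₀]
  have hmapsHP : ∀ t ∈ Icc (1:ℝ) T₀, (t:ℂ) ∈ HalfPlane := by
    intro t ht
    simp only [HalfPlane, mem_setOf_eq, Complex.ofReal_re]
    linarith [ht.1]
  have hcφ : ContinuousOn (fun t : ℝ => ‖φ (t:ℂ)‖) (Icc 1 T₀) := by
    apply continuous_norm.comp_continuousOn
    exact hd.continuousOn.comp Complex.continuous_ofReal.continuousOn hmapsHP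
  have hcψ : ContinuousOn (fun t : ℝ => t * ‖deriv φ (t:ℂ)‖) (Icc 1 T₀) := by
    apply ContinuousOn.mul continuousOn_id
    apply continuous_norm.comp_continuousOn
    have hda : AnalyticOnNhd ℂ (deriv φ) HalfPlane :=
      (hd.analyticOnNhd isOpen_halfPlane).deriv
    exact hda.continuousOn.comp Complex.continuous_ofReal.continuousOn hmapsHP
  have hne : (Icc (1:ℝ) T₀).Nonempty := ⟨1, le_refl 1, hT₀⟩
  obtain ⟨x₁, hx₁, hmin₁⟩ := isCompact_Icc.exists_isMinOn hne hcφ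
  obtain ⟨x₂, hx₂, hmin₂⟩ := isCompact_Icc.exists_isMinOn hne hcψ
  obtain ⟨x₃, hx₃, hmax₃⟩ := isCompact_Icc.exists_isMaxOn hne hcφ
  have hm₁0 : 0 < ‖φ ((x₁:ℝ):ℂ)‖ := hφpos x₁ hx₁.1
  have hm₂0 : 0 < x₂ * ‖deriv φ ((x₂:ℝ):ℂ)‖ :=
    mul_pos (by linarith [hx₂.1]) (hdpos x₂ hx₂.1)
  have hD₀0 : 0 ≤ Metric.diam (φ '' Q T₀) := Metric.diam_nonneg
  have hS0 : 0 ≤ ‖φ ((x₃:ℝ):ℂ)‖ := norm_nonneg _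
  have hA₁0 : 0 ≤ ‖φ (1:ℂ)‖ := norm_nonneg _
  -- the constant
  set d₁ := ‖φ 1 - φ 2‖ with hd₁def
  set m₁ := ‖φ ((x₁:ℝ):ℂ)‖ with hm₁def
  set m₂ := x₂ * ‖deriv φ ((x₂:ℝ):ℂ)‖ with hm₂def
  set S := ‖φ ((x₃:ℝ):ℂ)‖ with hSdef
  set D₀ := Metric.diam (φ '' Q T₀) with hD₀def
  set A₁ := ‖φ (1:ℂ)‖ with hA₁def
  set C := 1 + 12*H + 24*H*(M+1) + (A₁/d₁ + H) + D₀/m₁ + D₀/m₂ + S/d₁ with hCdef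
  have hn1 : 0 ≤ 12*H := by linarith
  have hn2 : 0 ≤ 24*H*(M+1) := by nlinarith
  have hn3 : 0 ≤ A₁/d₁ := div_nonneg hA₁0 hd₁pos.le
  have hn4 : 0 ≤ D₀/m₁ := div_nonneg hD₀0 hm₁0.le
  have hn5 : 0 ≤ D₀/m₂ := div_nonneg hD₀0 hm₂0.le
  have hn6 : 0 ≤ S/d₁ := div_nonneg hS0 hd₁pos.le
  have hC1 : 1 ≤ C := by rw [hCdef]; linarith
  have hC0 : 0 < C := by linarith
  have hCinv1 : C⁻¹ ≤ 1 := by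
    nlinarith [mul_nonneg (inv_nonneg.mpr hC0.le) (sub_nonneg.mpr hC1),
      mul_inv_cancel₀ hC0.ne']
  refine ⟨C⁻¹, C, by positivity, by linarith, ?_⟩
  intro T hT
  have hDge : d₁ ≤ Metric.diam (φ '' Q T) := hd₁le T hT
  have hD0 : 0 ≤ Metric.diam (φ '' Q T) := Metric.diam_nonneg
  have hPD : T * ‖deriv φ (T:ℂ)‖ ≤ Metric.diam (φ '' Q T) := hψD T hT
  have hA0 : 0 < ‖φ (T:ℂ)‖ := hφpos T hT
  have hP0 : 0 < T * ‖deriv φ (T:ℂ)‖ :=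
    mul_pos (by linarith) (hdpos T hT)
  have hbounds : ‖φ (T:ℂ)‖ ≤ C * Metric.diam (φ '' Q T) ∧
      Metric.diam (φ '' Q T) ≤ C * ‖φ (T:ℂ)‖ ∧
      Metric.diam (φ '' Q T) ≤ C * (T * ‖deriv φ (T:ℂ)‖) := by
    rcases le_or_gt T₀ T with hcase | hcase
    · -- large T
      have h1 := hDψ T hcase
      have h2 := hψφ T hT
      have h3 := hφψ T hcase
      refine ⟨?_, ?_, ?_⟩
      · -- |φ T| ≤ C * diam
        have hA₁D : A₁ ≤ (A₁/d₁) * Metric.diam (φ '' Q T) := by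
          calc A₁ = (A₁/d₁) * d₁ := (div_mul_cancel₀ A₁ hd₁pos.ne').symm
          _ ≤ (A₁/d₁) * Metric.diam (φ '' Q T) := mul_le_mul_of_nonneg_left hDge hn3
        have hHP : H * (T * ‖deriv φ (T:ℂ)‖) ≤ H * Metric.diam (φ '' Q T) :=
          mul_le_mul_of_nonneg_left hPD hH0.le
        calc ‖φ (T:ℂ)‖ ≤ A₁ + H * (T * ‖deriv φ (T:ℂ)‖) := h3
        _ ≤ (A₁/d₁) * Metric.diam (φ '' Q T) + H * Metric.diam (φ '' Q T) := by linarith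
        _ = (A₁/d₁ + H) * Metric.diam (φ '' Q T) := by ring
        _ ≤ C * Metric.diam (φ '' Q T) := by
            refine mul_le_mul_of_nonneg_right ?_ hD0
            rw [hCdef]; linarith
      · -- diam ≤ C * |φ T|
        calc Metric.diam (φ '' Q T) ≤ 12 * H * (T * ‖deriv φ (T:ℂ)‖) := h1
        _ ≤ 12 * H * (2*(M+1) * ‖φ (T:ℂ)‖) := mul_le_mul_of_nonneg_left h2 hn1
        _ = 24*H*(M+1) * ‖φ (T:ℂ)‖ := by ring
        _ ≤ C * ‖φ (T:ℂ)‖ := by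
            refine mul_le_mul_of_nonneg_right ?_ hA0.le
            rw [hCdef]; linarith
      · -- diam ≤ C * T|φ'(T)|
        calc Metric.diam (φ '' Q T) ≤ 12 * H * (T * ‖deriv φ (T:ℂ)‖) := h1
        _ ≤ C * (T * ‖deriv φ (T:ℂ)‖) := by
            refine mul_le_mul_of_nonneg_right ?_ hP0.le
            rw [hCdef]; linarith
    · -- small T : 1 ≤ T < T₀
      have hDD₀ : Metric.diam (φ '' Q T) ≤ D₀ := by
        rw [hD₀def]
        exact Metric.diam_mono (image_mono (Q_mono hcase.le)) (hbound T₀ hT₀)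
      have hmemT : T ∈ Icc (1:ℝ) T₀ := ⟨hT, hcase.le⟩
      have hAm : m₁ ≤ ‖φ (T:ℂ)‖ := (isMinOn_iff.mp hmin₁) T hmemT
      have hPm : m₂ ≤ T * ‖deriv φ (T:ℂ)‖ := (isMinOn_iff.mp hmin₂) T hmemT
      have hAS : ‖φ (T:ℂ)‖ ≤ S := (isMaxOn_iff.mp hmax₃) T hmemT
      refine ⟨?_, ?_, ?_⟩
      · calc ‖φ (T:ℂ)‖ ≤ S := hAS
        _ = (S/d₁) * d₁ := (div_mul_cancel₀ S hd₁pos.ne').symm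
        _ ≤ (S/d₁) * Metric.diam (φ '' Q T) := mul_le_mul_of_nonneg_left hDge hn6
        _ ≤ C * Metric.diam (φ '' Q T) := by
            refine mul_le_mul_of_nonneg_right ?_ hD0
            rw [hCdef]; linarith
      · calc Metric.diam (φ '' Q T) ≤ D₀ := hDD₀
        _ = (D₀/m₁) * m₁ := (div_mul_cancel₀ D₀ hm₁0.ne').symm
        _ ≤ (D₀/m₁) * ‖φ (T:ℂ)‖ := mul_le_mul_of_nonneg_left hAm hn4
        _ ≤ C * ‖φ (T:ℂ)‖ := by
            refine mul_le_mul_of_nonneg_right ?_ hA0.le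
            rw [hCdef]; linarith
      · calc Metric.diam (φ '' Q T) ≤ D₀ := hDD₀
        _ = (D₀/m₂) * m₂ := (div_mul_cancel₀ D₀ hm₂0.ne').symm
        _ ≤ (D₀/m₂) * (T * ‖deriv φ (T:ℂ)‖) := mul_le_mul_of_nonneg_left hPm hn5
        _ ≤ C * (T * ‖deriv φ (T:ℂ)‖) := by
            refine mul_le_mul_of_nonneg_right ?_ hP0.le
            rw [hCdef]; linarith
  obtain ⟨hb1, hb2, hb3⟩ := hbounds
  have hCinv0 : 0 ≤ C⁻¹ := inv_nonneg.mpr hC0.le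
  constructor
  · constructor
    · calc C⁻¹ * ‖φ (T:ℂ)‖ ≤ C⁻¹ * (C * Metric.diam (φ '' Q T)) :=
          mul_le_mul_of_nonneg_left hb1 hCinv0
      _ = Metric.diam (φ '' Q T) := by field_simp
    · exact hb2
  · constructor
    · calc C⁻¹ * (T * ‖deriv φ (T:ℂ)‖) ≤ 1 * (T * ‖deriv φ (T:ℂ)‖) :=
          mul_le_mul_of_nonneg_right hCinv1 hP0.le
      _ = T * ‖deriv φ (T:ℂ)‖ := one_mul _
      _ ≤ Metric.diam (φ '' Q T) := hPD
    · exact hb3
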